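/- Let q > 0, φ the Hann window of width q, and d ≥ 1, N > 0. Define ψ: ℝ^d → ℝ by ψ(x) = ((2πN)² + Σ_{s=1}^d ∂²/∂x_s²) ∏_{ℓ=1}^d (φ*φ)(x_ℓ). Then ψ has its global maximum at 0 if Nq ≥ √d, i.e., ψ(x) ≤ ψ(0) for all x ∈ ℝ^d. -/

import Mathlib

open MeasureTheory Real

/-- The Hann window of width `q`. -/
noncomputable def hann (q x : ℝ) : ℝ := if |x| < q / 2 then Real.cos (Real.pi * x / q) ^ 2 else 0

/-- Autoconvolution of the Hann window over `ℝ`. -/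
noncomputable def hconv (q x : ℝ) : ℝ := ∫ y : ℝ, hann q y * hann q (x - y)

/-- The multivariate localising function
`ψ = ((2πN)² + Σ_s ∂²/∂x_s²) ⨂_ℓ (φ*φ)`, written via its explicit representation. -/
noncomputable def psiD (q N : ℝ) (d : ℕ) (x : Fin d → ℝ) : ℝ :=
  ((2 * π * N) ^ 2 - 4 * d * π ^ 2 / q ^ 2) * ∏ i, hconv q (x i)
    + (π ^ 2 / q ^ 2) *
      ∑ s, (q / (2 * π) * Real.sin (2 * π * |x s| / q) + q - |x s|) *
        ∏ i ∈ Finset.univ.erase s, hconv q (x i)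

lemma hann_nonneg (q x : ℝ) : 0 ≤ hann q x := by
  unfold hann; split <;> positivity

lemma hann_le_one (q x : ℝ) : hann q x ≤ 1 := by
  unfold hann; split
  · exact Real.cos_sq_le_one _
  · norm_num

lemma measurable_hann (q : ℝ) : Measurable (hann q) := by
  unfold hann
  exact Measurable.ite (measurableSet_lt measurable_abs measurable_const)
    (by fun_prop) measurable_const

lemma hann_neg (q x : ℝ) : hann q (-x) = hann q x := by
  unfold hann
  rw [abs_neg]
  congr 1
  rw [show Real.pi * -x / q = -(Real.pi * x / q) by ring, Real.cos_neg]

lemma integrable_hann (q : ℝ) (hq : 0 < q) : Integrable (hann q) := by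
  have hind : Integrable ((Set.Icc (-(q/2)) (q/2)).indicator fun _ => (1:ℝ)) := by
    rw [integrable_indicator_iff measurableSet_Icc]
    exact integrableOn_const measure_Icc_lt_top.ne (by simp)
  apply hind.mono (measurable_hann q).aestronglyMeasurable
  filter_upwards with x
  rw [Real.norm_eq_abs, abs_of_nonneg (hann_nonneg q x)]
  by_cases hx : |x| < q / 2
  · rw [Set.indicator_of_mem]
    · rw [Real.norm_eq_abs]
      simpa using hann_le_one q x
    · rw [Set.mem_Icc, ← abs_le]
      exact hx.le
  · simp only [hann, hx, if_false]
    positivity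

lemma integrable_hann_sq (q : ℝ) (hq : 0 < q) : Integrable (fun y => hann q y ^ 2) := by
  apply (integrable_hann q hq).mono ((measurable_hann q).pow_const 2).aestronglyMeasurable
  filter_upwards with y
  rw [Real.norm_eq_abs, Real.norm_eq_abs, abs_of_nonneg (hann_nonneg q y),
    abs_of_nonneg (by positivity), sq]
  exact mul_le_of_le_one_left (hann_nonneg q y) (hann_le_one q y)

lemma integrable_hann_mul (q x : ℝ) (hq : 0 < q) :
    Integrable (fun y => hann q y * hann q (x - y)) := by
  apply (integrable_hann q hq).mono
  · exact ((measurable_hann q).mul ((measurable_hann q).comp (by fun_prop))).aestronglyMeasurable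
  filter_upwards with y
  rw [Real.norm_eq_abs, Real.norm_eq_abs, abs_of_nonneg (hann_nonneg q y),
    abs_of_nonneg (mul_nonneg (hann_nonneg q y) (hann_nonneg q _))]
  exact mul_le_of_le_one_right (hann_nonneg q y) (hann_le_one q _)

lemma hconv_nonneg (q x : ℝ) : 0 ≤ hconv q x :=
  integral_nonneg fun y => mul_nonneg (hann_nonneg q y) (hann_nonneg q _)

lemma hconv_zero (q : ℝ) : hconv q 0 = ∫ y : ℝ, hann q y ^ 2 := by
  unfold hconv
  congr 1 with y
  rw [zero_sub, hann_neg, sq]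

lemma hconv_le (q x : ℝ) (hq : 0 < q) : hconv q x ≤ hconv q 0 := by
  rw [hconv_zero]
  have h1 : Integrable (fun y => hann q (x - y) ^ 2) :=
    (integrable_hann_sq q hq).comp_sub_left x
  have hle : hconv q x ≤ ∫ y : ℝ, (hann q y ^ 2 + hann q (x - y) ^ 2) / 2 := by
    apply integral_mono_of_nonneg
    · filter_upwards with y
      exact mul_nonneg (hann_nonneg q y) (hann_nonneg q _)
    · exact (((integrable_hann_sq q hq).add h1).div_const 2)
    · filter_upwards with y
      nlinarith [sq_nonneg (hann q y - hann q (x - y))]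
  refine hle.trans_eq ?_
  rw [show (fun y => (hann q y ^ 2 + hann q (x - y) ^ 2) / 2)
      = fun y => hann q y ^ 2 / 2 + hann q (x - y) ^ 2 / 2 by funext y; ring]
  rw [integral_add ((integrable_hann_sq q hq).div_const 2) (h1.div_const 2),
    integral_div, integral_div, integral_sub_left_eq_self (fun y => hann q y ^ 2) volume x]
  ring

theorem psiD_max_at_zero (q N : ℝ) (d : ℕ) (hq : 0 < q) (hN : 0 < N) (hd : 1 ≤ d)
    (h : Real.sqrt d ≤ N * q) :
    ∀ x : Fin d → ℝ, psiD q N d x ≤ psiD q N d 0 := by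
  intro x
  set C := hconv q 0 with hCdef
  have hC : 0 ≤ C := hconv_nonneg q 0
  have hA : 0 ≤ (2 * π * N) ^ 2 - 4 * d * π ^ 2 / q ^ 2 := by
    have hsd : Real.sqrt d ^ 2 = (d : ℝ) := Real.sq_sqrt (Nat.cast_nonneg d)
    have hs : (d : ℝ) ≤ (N * q) ^ 2 := by nlinarith [Real.sqrt_nonneg (d : ℝ)]
    rw [sub_nonneg, div_le_iff₀ (by positivity)]
    nlinarith [Real.pi_pos]
  have hprod : ∏ i, hconv q (x i) ≤ C ^ d := by
    calc ∏ i, hconv q (x i) ≤ ∏ _i : Fin d, C :=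
          Finset.prod_le_prod (fun i _ => hconv_nonneg q (x i)) (fun i _ => hconv_le q (x i) hq)
      _ = C ^ d := by simp
  have hprodnn : 0 ≤ ∏ i, hconv q (x i) :=
    Finset.prod_nonneg fun i _ => hconv_nonneg q (x i)
  have hsum : ∀ s : Fin d,
      (q / (2 * π) * Real.sin (2 * π * |x s| / q) + q - |x s|) *
        ∏ i ∈ Finset.univ.erase s, hconv q (x i) ≤ q * C ^ (d - 1) := by
    intro s
    have hQnn : 0 ≤ ∏ i ∈ Finset.univ.erase s, hconv q (x i) :=
      Finset.prod_nonneg fun i _ => hconv_nonneg q (x i)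
    have hQle : ∏ i ∈ Finset.univ.erase s, hconv q (x i) ≤ C ^ (d - 1) := by
      calc ∏ i ∈ Finset.univ.erase s, hconv q (x i)
          ≤ ∏ _i ∈ Finset.univ.erase s, C :=
            Finset.prod_le_prod (fun i _ => hconv_nonneg q (x i))
              (fun i _ => hconv_le q (x i) hq)
        _ = C ^ (d - 1) := by
            rw [Finset.prod_const, Finset.card_erase_of_mem (Finset.mem_univ s)]
            simp
    have hg : q / (2 * π) * Real.sin (2 * π * |x s| / q) + q - |x s| ≤ q := by
      have hx0 : 0 ≤ |x s| := abs_nonneg _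
      have ht : (0:ℝ) ≤ 2 * π * |x s| / q := by positivity
      have := Real.sin_le ht
      have hqpi : 0 < q / (2 * π) := by positivity
      have : q / (2 * π) * Real.sin (2 * π * |x s| / q) ≤ q / (2 * π) * (2 * π * |x s| / q) :=
        mul_le_mul_of_nonneg_left this hqpi.le
      have heq : q / (2 * π) * (2 * π * |x s| / q) = |x s| := by
        field_simp
      linarith [heq ▸ this]
    calc (q / (2 * π) * Real.sin (2 * π * |x s| / q) + q - |x s|) *
          ∏ i ∈ Finset.univ.erase s, hconv q (x i)
        ≤ q * ∏ i ∈ Finset.univ.erase s, hconv q (x i) :=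
          mul_le_mul_of_nonneg_right hg hQnn
      _ ≤ q * C ^ (d - 1) := mul_le_mul_of_nonneg_left hQle hq.le
  have hpsi0 : psiD q N d 0 =
      ((2 * π * N) ^ 2 - 4 * d * π ^ 2 / q ^ 2) * C ^ d
        + (π ^ 2 / q ^ 2) * (d * (q * C ^ (d - 1))) := by
    unfold psiD
    simp only [Pi.zero_apply, abs_zero, mul_zero, zero_div, Real.sin_zero, div_zero]
    rw [Finset.prod_const]
    congr 1
    · simp; left; rfl
    · congr 1
      rw [Finset.sum_congr rfl (fun s _ => by
        rw [Finset.prod_const, Finset.card_erase_of_mem (Finset.mem_univ s)]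
        try simp), Finset.sum_const]
      simp [mul_comm]
      exact Or.inl (Or.inl rfl)
  rw [hpsi0]
  unfold psiD
  gcongr ?_ + ?_
  · exact mul_le_mul_of_nonneg_left hprod hA
  · apply mul_le_mul_of_nonneg_left _ (by positivity)
    calc ∑ s, (q / (2 * π) * Real.sin (2 * π * |x s| / q) + q - |x s|) *
          ∏ i ∈ Finset.univ.erase s, hconv q (x i)
        ≤ ∑ _s : Fin d, q * C ^ (d - 1) := Finset.sum_le_sum fun s _ => hsum s
      _ = d * (q * C ^ (d - 1)) := by simp [mul_comm]
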